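/- Let V be the additive group of functions v : Fin 5 → ZMod 3 whose coordinates sum to zero (an elementary abelian group of order 81), and let G be the semidirect product V ⋊ ZMod 5, where the generator 1 of ZMod 5 acts by cyclically shifting the coordinates: (σ·v)(i) = v(i+1). Then every nontrivial proper subgroup of G is isomorphic to one of the following: ZMod 5, ZMod 3, (ZMod 3)², (ZMod 3)³, or (ZMod 3)⁴. -/

import Mathlib

/-- The homomorphism `ZMod n → M` sending `1` to a fixed element `ψ` with `ψ ^ n = 1`. -/
def zmodPowHom (n : ℕ) [NeZero n] {M : Type*} [Monoid M] (ψ : M) (h : ψ ^ n = 1) :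
    Multiplicative (ZMod n) →* M where
  toFun k := ψ ^ (Multiplicative.toAdd k).val
  map_one' := by simp
  map_mul' a b := by
    have key : ∀ m : ℕ, ψ ^ (m % n) = ψ ^ m := by
      intro m
      conv_rhs => rw [← Nat.mod_add_div m n]
      rw [pow_add, pow_mul, h, one_pow, mul_one]
    show ψ ^ (Multiplicative.toAdd (a * b)).val = _
    rw [toAdd_mul, ZMod.val_add, key, pow_add]

/-- The homomorphism summing the coordinates of a vector in `Fin 5 → ZMod 3`. -/
def sumHom : (Fin 5 → ZMod 3) →+ ZMod 3 where
  toFun v := ∑ i, v i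
  map_zero' := by simp
  map_add' a b := by simp [Finset.sum_add_distrib]

/-- The cyclic-shift automorphism `v ↦ (i ↦ v (i + 1))` of the group of vectors in
`Fin 5 → ZMod 3` with coordinate sum zero. -/
def shiftAdd : sumHom.ker ≃+ sumHom.ker where
  toFun v := ⟨fun i => (v : Fin 5 → ZMod 3) (i + 1), by
    have hv := v.2
    simp only [AddMonoidHom.mem_ker, sumHom, AddMonoidHom.coe_mk, ZeroHom.coe_mk] at hv ⊢
    rw [← hv]
    exact Fintype.sum_equiv (Equiv.addRight 1) _ _ (fun i => rfl)⟩
  invFun v := ⟨fun i => (v : Fin 5 → ZMod 3) (i - 1), by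
    have hv := v.2
    simp only [AddMonoidHom.mem_ker, sumHom, AddMonoidHom.coe_mk, ZeroHom.coe_mk] at hv ⊢
    rw [← hv]
    exact Fintype.sum_equiv (Equiv.subRight 1) _ _ (fun i => rfl)⟩
  left_inv v := by
    ext i
    show (v : Fin 5 → ZMod 3) (i - 1 + 1) = (v : Fin 5 → ZMod 3) i
    rw [sub_add_cancel]
  right_inv v := by
    ext i
    show (v : Fin 5 → ZMod 3) (i + 1 - 1) = (v : Fin 5 → ZMod 3) i
    rw [add_sub_cancel_right]
  map_add' v w := rfl

lemma shiftAdd_pow_five : 5 • (shiftAdd : AddAut sumHom.ker) = 0 := by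
  ext v i
  rw [succ_nsmul, succ_nsmul, succ_nsmul, succ_nsmul, one_nsmul]
  simp only [AddAut.add_apply, AddAut.zero_apply]
  show (v : Fin 5 → ZMod 3) (i + 1 + 1 + 1 + 1 + 1) = (v : Fin 5 → ZMod 3) i
  have h5 : ∀ j : Fin 5, j + 1 + 1 + 1 + 1 + 1 = j := by decide
  rw [h5]

lemma shiftAdd_iter (x : sumHom.ker) :
    shiftAdd (shiftAdd (shiftAdd (shiftAdd (shiftAdd x)))) = x := by
  ext i
  show (x : Fin 5 → ZMod 3) (i + 1 + 1 + 1 + 1 + 1) = (x : Fin 5 → ZMod 3) i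
  have h5 : ∀ j : Fin 5, j + 1 + 1 + 1 + 1 + 1 = j := by decide
  rw [h5]

/-- The cyclic-shift automorphism, as an automorphism of the multiplicative form of the
group of vectors in `Fin 5 → ZMod 3` with coordinate sum zero. -/
def shiftMul : MulAut (Multiplicative sumHom.ker) where
  toFun v := Multiplicative.ofAdd (shiftAdd (Multiplicative.toAdd v))
  invFun v := Multiplicative.ofAdd (shiftAdd.symm (Multiplicative.toAdd v))
  left_inv v := by simp
  right_inv v := by simp
  map_mul' v w := by
    simp only [toAdd_mul, map_add, ← ofAdd_add]

lemma shiftMul_pow_five : shiftMul ^ 5 = 1 := by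
  ext v : 1
  rw [pow_succ, pow_succ, pow_succ, pow_succ, pow_one]
  simp only [MulAut.mul_apply, MulAut.one_apply]
  show Multiplicative.ofAdd
      (shiftAdd (shiftAdd (shiftAdd (shiftAdd (shiftAdd (Multiplicative.toAdd v)))))) = v
  rw [shiftAdd_iter, ofAdd_toAdd]

/-- The group `V ⋊ ZMod 5` of order 405 (GAP ID `[405,15]`), where `V` is the group of
vectors in `Fin 5 → ZMod 3` with coordinate sum zero and the generator `1` of `ZMod 5`
acts by the cyclic shift `(σ·v) i = v (i + 1)`. -/
abbrev G405 : Type :=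
  SemidirectProduct (Multiplicative sumHom.ker) (Multiplicative (ZMod 5))
    (zmodPowHom 5 shiftMul shiftMul_pow_five)

/-! ### Auxiliary lemmas -/

set_option maxRecDepth 100000

open Fin.NatCast

set_option maxHeartbeats 4000000 in
lemma keyA : ∀ w : Fin 5 → ZMod 3, (∑ i, w i = 0) → w ≠ 0 →
    ∀ c : Fin 5 → ZMod 3, (∑ i, c i = 0) → (∀ i, ∑ j, c j * w (i + j) = 0) → c = 0 := by
  decide

lemma mem_sumHom_ker_iff (v : Fin 5 → ZMod 3) : v ∈ sumHom.ker ↔ ∑ i, v i = 0 := Iff.rfl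

lemma shift_iter_coe (n : ℕ) (x : sumHom.ker) (i : Fin 5) :
    ((shiftAdd^[n] x : sumHom.ker) : Fin 5 → ZMod 3) i = (x : Fin 5 → ZMod 3) (i + n) := by
  induction n generalizing i x with
  | zero => simp
  | succ n ih =>
    rw [Function.iterate_succ_apply, ih]
    show (x : Fin 5 → ZMod 3) (i + ↑n + 1) = (x : Fin 5 → ZMod 3) (i + ↑(n + 1))
    have h : i + ((n + 1 : ℕ) : Fin 5) = i + ↑n + 1 := by rw [Nat.cast_succ, add_assoc]
    rw [h]

lemma shift_iter_five (x : sumHom.ker) : shiftAdd^[5] x = x := by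
  ext i
  rw [shift_iter_coe]
  have h : ((5 : ℕ) : Fin 5) = 0 := rfl
  rw [h, add_zero]

lemma shift_iter_mod (n : ℕ) (x : sumHom.ker) : shiftAdd^[n] x = shiftAdd^[n % 5] x := by
  induction n using Nat.strong_induction_on with
  | _ n ih =>
    rcases lt_or_ge n 5 with h | h
    · rw [Nat.mod_eq_of_lt h]
    · obtain ⟨m, rfl⟩ : ∃ m, n = m + 5 := ⟨n - 5, by omega⟩
      rw [Function.iterate_add_apply, shift_iter_five, ih m (by omega),
        Nat.add_mod_right]

/-- Any nonzero shift-invariant additive subgroup of `V` is everything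
(irreducibility of `V` as a module over `F₃[C₅]`). -/
lemma shift_invariant_eq_top (W : AddSubgroup sumHom.ker)
    (hshift : ∀ x ∈ W, shiftAdd x ∈ W) (w : sumHom.ker) (hw : w ∈ W) (hw0 : w ≠ 0) :
    W = ⊤ := by
  have hiter : ∀ n : ℕ, ∀ x ∈ W, shiftAdd^[n] x ∈ W := by
    intro n
    induction n with
    | zero => exact fun x hx => hx
    | succ n ih =>
      intro x hx
      rw [Function.iterate_succ_apply]
      exact ih _ (hshift x hx)
  have hwsum : ∑ i, (w : Fin 5 → ZMod 3) i = 0 := w.2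
  have hwne : (w : Fin 5 → ZMod 3) ≠ 0 := fun h => hw0 (Subtype.ext h)
  -- the additive endomorphism `c ↦ ∑ j, c j • σʲ w` of `V`
  have hsum0 : ∀ c : sumHom.ker, ∑ i, ∑ j, (c : Fin 5 → ZMod 3) j *
      (w : Fin 5 → ZMod 3) (i + j) = 0 := by
    intro c
    rw [Finset.sum_comm]
    have : ∀ j : Fin 5, ∑ i, (c : Fin 5 → ZMod 3) j * (w : Fin 5 → ZMod 3) (i + j) = 0 := by
      intro j
      rw [← Finset.mul_sum]
      have : ∑ i, (w : Fin 5 → ZMod 3) (i + j) = ∑ i, (w : Fin 5 → ZMod 3) i :=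
        Fintype.sum_equiv (Equiv.addRight j) _ _ (fun i => rfl)
      rw [this, hwsum, mul_zero]
    simp [this]
  set f : sumHom.ker →+ sumHom.ker :=
    { toFun := fun c => ⟨fun i => ∑ j, (c : Fin 5 → ZMod 3) j * (w : Fin 5 → ZMod 3) (i + j),
        hsum0 c⟩
      map_zero' := by
        ext i
        simp
      map_add' := fun a b => by
        ext i
        have h : ((a + b : sumHom.ker) : Fin 5 → ZMod 3) = (a : Fin 5 → ZMod 3) +
            (b : Fin 5 → ZMod 3) := rfl
        show ∑ j, ((a + b : sumHom.ker) : Fin 5 → ZMod 3) j * (w : Fin 5 → ZMod 3) (i + j) = _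
        rw [h]
        show _ = (∑ j, (a : Fin 5 → ZMod 3) j * (w : Fin 5 → ZMod 3) (i + j)) +
          (∑ j, (b : Fin 5 → ZMod 3) j * (w : Fin 5 → ZMod 3) (i + j))
        simp [add_mul, Finset.sum_add_distrib] } with hf
  have hker : ∀ c, f c = 0 → c = 0 := by
    intro c hc
    have h1 : ∀ i, ∑ j, (c : Fin 5 → ZMod 3) j * (w : Fin 5 → ZMod 3) (i + j) = 0 := by
      intro i
      exact congrFun (congrArg (Subtype.val) hc) i
    exact Subtype.ext (keyA _ hwsum hwne _ c.2 h1)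
  have hinj : Function.Injective f := by
    intro a b hab
    have : f (a - b) = 0 := by rw [map_sub, hab, sub_self]
    have := hker _ this
    rwa [sub_eq_zero] at this
  have hsurj : Function.Surjective f := Finite.injective_iff_surjective.mp hinj
  ext v
  simp only [AddSubgroup.mem_top, iff_true]
  obtain ⟨c, hc⟩ := hsurj v
  have hrepr : f c = ∑ j : Fin 5, ((c : Fin 5 → ZMod 3) j).val • (shiftAdd^[(j : ℕ)] w) := by
    ext i
    rw [AddSubmonoidClass.coe_finset_sum, Finset.sum_apply]
    show ∑ j, (c : Fin 5 → ZMod 3) j * (w : Fin 5 → ZMod 3) (i + j) = _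
    refine Finset.sum_congr rfl (fun j _ => ?_)
    have : ((((c : Fin 5 → ZMod 3) j).val • (shiftAdd^[(j : ℕ)] w) : sumHom.ker)
        : Fin 5 → ZMod 3) i = ((c : Fin 5 → ZMod 3) j).val •
          ((shiftAdd^[(j : ℕ)] w : sumHom.ker) : Fin 5 → ZMod 3) i := by
      norm_cast
    rw [this, shift_iter_coe, Fin.cast_val_eq_self, nsmul_eq_mul, ZMod.natCast_val,
      ZMod.cast_id]
  rw [← hc, hrepr]
  exact AddSubgroup.sum_mem _ (fun j _ => AddSubgroup.nsmul_mem _ (hiter _ _ hw) _)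

open SemidirectProduct in
lemma conj_inl (g : G405) (n : Multiplicative sumHom.ker) :
    g * inl n * g⁻¹ = inl ((zmodPowHom 5 shiftMul shiftMul_pow_five) g.right n) := by
  conv_lhs => rw [← inl_left_mul_inr_right g]
  have h1 : inr (φ := zmodPowHom 5 shiftMul shiftMul_pow_five) g.right * inl n *
      (inr g.right)⁻¹ = inl ((zmodPowHom 5 shiftMul shiftMul_pow_five) g.right n) := by
    have := (inl_aut (φ := zmodPowHom 5 shiftMul shiftMul_pow_five) g.right n).symm
    rwa [map_inv] at this
  calc inl g.left * inr g.right * inl n * (inl g.left * inr g.right)⁻¹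
      = inl g.left * (inr (φ := zmodPowHom 5 shiftMul shiftMul_pow_five) g.right * inl n *
        (inr g.right)⁻¹) * (inl g.left)⁻¹ := by group
    _ = inl g.left * inl ((zmodPowHom 5 shiftMul shiftMul_pow_five) g.right n) *
        (inl g.left)⁻¹ := by rw [h1]
    _ = inl ((zmodPowHom 5 shiftMul shiftMul_pow_five) g.right n) := by
        rw [← map_inv, ← map_mul, ← map_mul, mul_comm g.left, mul_inv_cancel_right]

lemma shiftMul_pow_apply (m : ℕ) (v : sumHom.ker) :
    (shiftMul ^ m) (Multiplicative.ofAdd v) = Multiplicative.ofAdd (shiftAdd^[m] v) := by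
  induction m generalizing v with
  | zero => rfl
  | succ m ih =>
    rw [pow_succ, MulAut.mul_apply]
    have h : shiftMul (Multiplicative.ofAdd v) = Multiplicative.ofAdd (shiftAdd v) := rfl
    rw [h, ih, Function.iterate_succ_apply]

lemma phi_apply (q : Multiplicative (ZMod 5)) (v : sumHom.ker) :
    (zmodPowHom 5 shiftMul shiftMul_pow_five) q (Multiplicative.ofAdd v) =
    Multiplicative.ofAdd (shiftAdd^[(Multiplicative.toAdd q).val] v) :=
  shiftMul_pow_apply _ v

/-- Equivalence `(Fin 1 → ZMod 3) ≃+ ZMod 3`. -/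
def epi1 : (Fin 1 → ZMod 3) ≃+ ZMod 3 where
  toFun f := f 0
  invFun x := fun _ => x
  left_inv f := by funext i; fin_cases i <;> rfl
  right_inv x := rfl
  map_add' a b := rfl

/-- Equivalence `(Fin (n+1) → ZMod 3) ≃+ ZMod 3 × (Fin n → ZMod 3)`. -/
def episucc (n : ℕ) : (Fin (n + 1) → ZMod 3) ≃+ ZMod 3 × (Fin n → ZMod 3) where
  toFun f := (f 0, fun i => f i.succ)
  invFun p := Fin.cons p.1 p.2
  left_inv f := Fin.cons_self_tail f
  right_inv p := by
    refine Prod.ext (by simp) (funext fun i => by simp)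
  map_add' a b := rfl

def epi2 : (Fin 2 → ZMod 3) ≃+ ZMod 3 × ZMod 3 :=
  (episucc 1).trans (AddEquiv.prodCongr (AddEquiv.refl _) epi1)

def epi3 : (Fin 3 → ZMod 3) ≃+ ZMod 3 × ZMod 3 × ZMod 3 :=
  (episucc 2).trans (AddEquiv.prodCongr (AddEquiv.refl _) epi2)

def epi4 : (Fin 4 → ZMod 3) ≃+ ZMod 3 × ZMod 3 × ZMod 3 × ZMod 3 :=
  (episucc 3).trans (AddEquiv.prodCongr (AddEquiv.refl _) epi3)

lemma card_sumHom_ker : Nat.card sumHom.ker = 81 := by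
  have e : sumHom.ker ≃ {v : Fin 5 → ZMod 3 // ∑ i, v i = 0} :=
    Equiv.subtypeEquivRight (fun x => Iff.rfl)
  rw [Nat.card_congr e, Nat.card_eq_fintype_card]
  decide

lemma card_mult_zmod5 : Nat.card (Multiplicative (ZMod 5)) = 5 := by
  rw [Nat.card_congr (Multiplicative.toAdd (α := ZMod 5)), Nat.card_zmod]

lemma three_nsmul_ker (x : sumHom.ker) : 3 • x = 0 := by
  ext i
  show 3 • (x : Fin 5 → ZMod 3) i = 0
  have h : ((3 : ℕ) : ZMod 3) = 0 := by decide
  rw [nsmul_eq_mul, h, zero_mul]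

set_option maxHeartbeats 1600000 in
theorem subgroups_of_G405 (H : Subgroup G405) (hbot : H ≠ ⊥) (htop : H ≠ ⊤) :
    Nonempty (H ≃* Multiplicative (ZMod 5)) ∨
    Nonempty (H ≃* Multiplicative (ZMod 3)) ∨
    Nonempty (H ≃* Multiplicative (ZMod 3 × ZMod 3)) ∨
    Nonempty (H ≃* Multiplicative (ZMod 3 × ZMod 3 × ZMod 3)) ∨
    Nonempty (H ≃* Multiplicative (ZMod 3 × ZMod 3 × ZMod 3 × ZMod 3)) := by
  haveI : Fact (Nat.Prime 3) := ⟨by norm_num⟩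
  haveI : Fact (Nat.card (Multiplicative (ZMod 5))).Prime :=
    ⟨by rw [card_mult_zmod5]; norm_num⟩
  have hinl_of : ∀ g : G405, g.right = 1 → SemidirectProduct.inl g.left = g := by
    intro g hr
    conv_rhs => rw [← SemidirectProduct.inl_left_mul_inr_right g]
    rw [hr, map_one, mul_one]
  set W : AddSubgroup sumHom.ker :=
    { carrier := {v | SemidirectProduct.inl (Multiplicative.ofAdd v) ∈ H}
      zero_mem' := by
        show SemidirectProduct.inl (Multiplicative.ofAdd (0 : sumHom.ker)) ∈ H
        rw [ofAdd_zero, map_one]; exact H.one_mem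
      add_mem' := fun {a b} ha hb => by
        show SemidirectProduct.inl (Multiplicative.ofAdd (a + b)) ∈ H
        rw [ofAdd_add, map_mul]; exact H.mul_mem ha hb
      neg_mem' := fun {a} ha => by
        show SemidirectProduct.inl (Multiplicative.ofAdd (-a)) ∈ H
        rw [ofAdd_neg, map_inv]; exact H.inv_mem ha } with hWdef
  by_cases hV : ∀ h ∈ H, (h : G405).right = 1
  · -- `H` is contained in the normal subgroup `V`
    have hmem : ∀ h : H, Multiplicative.toAdd ((h : G405).left) ∈ W := by
      intro h
      show SemidirectProduct.inl (Multiplicative.ofAdd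
        (Multiplicative.toAdd ((h : G405)).left)) ∈ H
      rw [ofAdd_toAdd, hinl_of _ (hV h h.2)]
      exact h.2
    let e : H ≃* Multiplicative W :=
    { toFun := fun h =>
        Multiplicative.ofAdd (⟨Multiplicative.toAdd ((h : G405).left), hmem h⟩ : W)
      invFun := fun w =>
        ⟨SemidirectProduct.inl (Multiplicative.ofAdd
          ((Multiplicative.toAdd w : W) : sumHom.ker)), (Multiplicative.toAdd w).2⟩
      left_inv := fun h => by
        apply Subtype.ext
        show SemidirectProduct.inl (Multiplicative.ofAdd
          (Multiplicative.toAdd ((h : G405)).left)) = (h : G405)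
        rw [ofAdd_toAdd]
        exact hinl_of _ (hV h h.2)
      right_inv := fun w => rfl
      map_mul' := fun a b => by
        show Multiplicative.ofAdd _ = Multiplicative.ofAdd _ * Multiplicative.ofAdd _
        rw [← ofAdd_add]
        congr 1
        apply Subtype.ext
        show Multiplicative.toAdd (((a * b : H) : G405)).left =
          Multiplicative.toAdd ((a : G405)).left + Multiplicative.toAdd ((b : G405)).left
        have hab : (((a * b : H) : G405)).left = (a : G405).left *
            (zmodPowHom 5 shiftMul shiftMul_pow_five) ((a : G405)).right ((b : G405)).left :=
          SemidirectProduct.mul_left _ _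
        rw [hab, hV a a.2, map_one, MulAut.one_apply, toAdd_mul] }
    letI : Module (ZMod 3) W := AddCommGroup.zmodModule (by
      intro x
      apply Subtype.ext
      show (3 : ℕ) • (x : sumHom.ker) = 0
      exact three_nsmul_ker _)
    letI : Fintype W := Fintype.ofFinite _
    haveI : Module.Finite (ZMod 3) W := Module.Finite.of_finite
    set d := Module.finrank (ZMod 3) W with hd
    have hcard : Nat.card W = 3 ^ d := by
      rw [Nat.card_eq_fintype_card]
      have h := Module.card_eq_pow_finrank (K := ZMod 3) (V := W)
      rwa [ZMod.card] at h
    have hcardH : Nat.card H = Nat.card W := by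
      rw [Nat.card_congr e.toEquiv, Nat.card_congr Multiplicative.toAdd]
    have hd4 : d ≤ 4 := by
      have hdvd : Nat.card W ∣ 81 := by
        rw [← card_sumHom_ker]
        exact AddSubgroup.card_addSubgroup_dvd_card W
      rw [hcard, show (81 : ℕ) = 3 ^ 4 by norm_num] at hdvd
      exact (Nat.pow_dvd_pow_iff_le_right (by norm_num)).mp hdvd
    have hd1 : 1 ≤ d := by
      rcases Nat.eq_zero_or_pos d with h0 | h
      · exfalso
        apply hbot
        apply Subgroup.eq_bot_of_card_eq
        rw [hcardH, hcard, h0, pow_zero]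
      · exact h
    have eW : ∀ n : ℕ, d = n → (W ≃+ (Fin n → ZMod 3)) := fun n hn =>
      (Module.finBasisOfFinrankEq (ZMod 3) W (by rw [← hd, hn])).equivFun.toAddEquiv
    interval_cases d
    · exact Or.inr (Or.inl ⟨e.trans (AddEquiv.toMultiplicative ((eW 1 rfl).trans epi1))⟩)
    · exact Or.inr (Or.inr (Or.inl
        ⟨e.trans (AddEquiv.toMultiplicative ((eW 2 rfl).trans epi2))⟩))
    · exact Or.inr (Or.inr (Or.inr (Or.inl
        ⟨e.trans (AddEquiv.toMultiplicative ((eW 3 rfl).trans epi3))⟩)))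
    · exact Or.inr (Or.inr (Or.inr (Or.inr
        ⟨e.trans (AddEquiv.toMultiplicative ((eW 4 rfl).trans epi4))⟩)))
  · push_neg at hV
    obtain ⟨h₀, hh₀, hr₀⟩ := hV
    by_cases hK : ∀ h ∈ H, (h : G405).right = 1 → h = 1
    · -- `H ∩ V` is trivial, so `H` is cyclic of order 5
      left
      let f : H →* Multiplicative (ZMod 5) := SemidirectProduct.rightHom.comp H.subtype
      have hfval : ∀ a : H, f a = (a : G405).right := fun a => rfl
      have hfinj : Function.Injective f := by
        refine (injective_iff_map_eq_one f).mpr (fun a ha => ?_)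
        rw [hfval] at ha
        exact Subtype.ext (hK a a.2 ha)
      have hfsurj : Function.Surjective f := by
        rw [← MonoidHom.range_eq_top]
        rcases f.range.eq_bot_or_eq_top_of_prime_card with hb | ht
        · exfalso
          have hmem : f ⟨h₀, hh₀⟩ ∈ f.range := ⟨_, rfl⟩
          rw [hb, Subgroup.mem_bot, hfval] at hmem
          exact hr₀ hmem
        · exact ht
      exact ⟨MulEquiv.ofBijective f ⟨hfinj, hfsurj⟩⟩
    · -- `H ∩ V` is nontrivial, so `H = ⊤`, a contradiction
      exfalso
      push_neg at hK
      obtain ⟨u, hu, hur, hune⟩ := hK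
      set k : ZMod 5 := Multiplicative.toAdd ((h₀ : G405).right) with hk
      have hk0 : k ≠ 0 := fun h => hr₀ (by
        rw [← ofAdd_toAdd ((h₀ : G405).right), ← hk, h, ofAdd_zero])
      -- W is closed under the k-fold shift
      have hSclosed : ∀ v ∈ W, shiftAdd^[k.val] v ∈ W := by
        intro v hv
        have hconj := H.mul_mem (H.mul_mem hh₀ hv) (H.inv_mem hh₀)
        rw [show h₀ * SemidirectProduct.inl (Multiplicative.ofAdd v) * h₀⁻¹ =
          SemidirectProduct.inl ((zmodPowHom 5 shiftMul shiftMul_pow_five)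
            (h₀ : G405).right (Multiplicative.ofAdd v)) from by
            exact conj_inl _ _] at hconj
        rwa [phi_apply] at hconj
      have hSiter : ∀ m : ℕ, ∀ v ∈ W, shiftAdd^[k.val * m] v ∈ W := by
        intro m
        induction m with
        | zero => intro v hv; simpa using hv
        | succ m ih =>
          intro v hv
          have : k.val * (m + 1) = k.val * m + k.val := by ring
          rw [this, Function.iterate_add_apply]
          exact ih _ (hSclosed v hv)
      have hshiftW : ∀ v ∈ W, shiftAdd v ∈ W := by
        have hkv5 : k.val < 5 := ZMod.val_lt k
        have hkv0 : k.val ≠ 0 := fun h => hk0 ((ZMod.val_eq_zero k).mp h)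
        obtain ⟨m, hm⟩ : ∃ m : ℕ, (k.val * m) % 5 = 1 := by
          interval_cases h : k.val
          · exact absurd rfl hkv0
          · exact ⟨1, by norm_num⟩
          · exact ⟨3, by norm_num⟩
          · exact ⟨2, by norm_num⟩
          · exact ⟨4, by norm_num⟩
        intro v hv
        have h1 : shiftAdd v = shiftAdd^[k.val * m] v := by
          rw [shift_iter_mod (k.val * m), hm]
          rfl
        rw [h1]
        exact hSiter m v hv
      -- W contains the nonzero element coming from u
      have huleft : SemidirectProduct.inl ((u : G405)).left = (u : G405) := hinl_of _ hur
      have humem : Multiplicative.toAdd ((u : G405)).left ∈ W := by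
        show SemidirectProduct.inl (Multiplicative.ofAdd
          (Multiplicative.toAdd ((u : G405)).left)) ∈ H
        rw [ofAdd_toAdd, huleft]
        exact hu
      have hune0 : Multiplicative.toAdd ((u : G405)).left ≠ 0 := by
        intro h
        apply hune
        have h1 : (u : G405).left = 1 := by
          rw [← ofAdd_toAdd ((u : G405)).left, h, ofAdd_zero]
        rw [← huleft, h1, map_one]
      have hWtop : W = ⊤ := shift_invariant_eq_top W hshiftW _ humem hune0
      -- hence H contains all of V
      have hinlH : ∀ x : Multiplicative sumHom.ker, SemidirectProduct.inl x ∈ H := by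
        intro x
        have : Multiplicative.toAdd x ∈ W := hWtop ▸ AddSubgroup.mem_top _
        have h2 : SemidirectProduct.inl (Multiplicative.ofAdd (Multiplicative.toAdd x)) ∈ H :=
          this
        rwa [ofAdd_toAdd] at h2
      -- and the element inr h₀.right
      have hinr : SemidirectProduct.inr (φ := zmodPowHom 5 shiftMul shiftMul_pow_five)
          ((h₀ : G405)).right ∈ H := by
        have h1 : (SemidirectProduct.inl ((h₀ : G405)).left)⁻¹ * h₀ =
            SemidirectProduct.inr ((h₀ : G405)).right := by
          rw [inv_mul_eq_iff_eq_mul]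
          exact (SemidirectProduct.inl_left_mul_inr_right h₀).symm
        rw [← h1]
        exact H.mul_mem (H.inv_mem (hinlH _)) hh₀
      -- so H = ⊤
      apply htop
      haveI : Fact (Nat.Prime 5) := ⟨by norm_num⟩
      ext g
      simp only [Subgroup.mem_top, iff_true]
      rw [← SemidirectProduct.inl_left_mul_inr_right g]
      refine H.mul_mem (hinlH _) ?_
      have hzp : (g : G405).right ∈ Subgroup.zpowers ((h₀ : G405)).right :=
        mem_zpowers_of_prime_card card_mult_zmod5 hr₀
      obtain ⟨z, hz⟩ := Subgroup.mem_zpowers_iff.mp hzp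
      rw [← hz, map_zpow]
      exact Subgroup.zpow_mem H hinr z
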